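/- The unique solution ψ on [0,∞) of the integro-differential equation ψ(χ) + χψ'(χ) + χψ(χ) = ∫_χ^∞ ψ(x) dx, with boundary conditions ψ bounded at 0, ψ(χ) → 0 as χ → ∞, and normalization ∫₀^∞ ψ = 1, is ψ(χ) = e^{-χ}. -/

import Mathlib

open MeasureTheory Filter

/-- The unique `C¹`, integrable, normalized solution on `[0,∞)` of
`ψ(χ) + χψ'(χ) + χψ(χ) = ∫_χ^∞ ψ(x) dx` vanishing at infinity is `ψ(χ) = e^{-χ}`. -/
theorem scaling_equation_unique_solution (ψ : ℝ → ℝ)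
    (hC : ContDiff ℝ 1 ψ)
    (hint : IntegrableOn ψ (Set.Ici (0:ℝ)))
    (heq : ∀ χ : ℝ, 0 ≤ χ →
      ψ χ + χ * deriv ψ χ + χ * ψ χ = ∫ x in Set.Ioi χ, ψ x)
    (hlim : Tendsto ψ atTop (nhds 0))
    (hnorm : ∫ x in Set.Ici (0:ℝ), ψ x = 1) :
    ∀ χ : ℝ, 0 ≤ χ → ψ χ = Real.exp (-χ) := by
  have hcont : Continuous ψ := hC.continuous
  have hdiff : Differentiable ℝ ψ := hC.differentiable one_ne_zero
  set G : ℝ → ℝ := fun χ => 1 - ∫ x in (0:ℝ)..χ, ψ x with hGdef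
  have hnorm' : ∫ x in Set.Ioi (0:ℝ), ψ x = 1 := by
    rw [← MeasureTheory.integral_Ici_eq_integral_Ioi]; exact hnorm
  -- `G χ` is the tail integral for `χ ≥ 0`
  have hGeq : ∀ χ : ℝ, 0 ≤ χ → (∫ x in Set.Ioi χ, ψ x) = G χ := by
    intro χ hχ
    have hsplit : (∫ x in Set.Ioc 0 χ, ψ x) + ∫ x in Set.Ioi χ, ψ x
        = ∫ x in Set.Ioi (0:ℝ), ψ x := by
      rw [← MeasureTheory.setIntegral_union (Set.Ioc_disjoint_Ioi le_rfl)
        measurableSet_Ioi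
        (hint.mono_set (Set.Ioc_subset_Icc_self.trans Set.Icc_subset_Ici_self))
        (hint.mono_set (Set.Ioi_subset_Ici hχ)),
        Set.Ioc_union_Ioi_eq_Ioi hχ]
    have hiv : (∫ x in (0:ℝ)..χ, ψ x) = ∫ x in Set.Ioc 0 χ, ψ x :=
      intervalIntegral.integral_of_le hχ
    simp only [hGdef, hiv]
    rw [hnorm'] at hsplit
    linarith
  -- `G` is differentiable with derivative `-ψ`
  have hGderiv : ∀ χ : ℝ, HasDerivAt G (-ψ χ) χ := by
    intro χ
    have h1 : HasDerivAt (fun u => ∫ x in (0:ℝ)..u, ψ x) (ψ χ) χ :=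
      intervalIntegral.integral_hasDerivAt_right (hcont.intervalIntegrable 0 χ)
        (hcont.stronglyMeasurable.stronglyMeasurableAtFilter)
        hcont.continuousAt
    exact ((hasDerivAt_const χ (1:ℝ)).sub h1).congr_deriv (by simp)
  -- `G = ψ` on `[0,∞)`
  have hGψ : ∀ χ : ℝ, 0 ≤ χ → G χ = ψ χ := by
    have hE : ∀ χ : ℝ, 0 ≤ χ → HasDerivAt (fun x => x * (G x - ψ x)) 0 χ := by
      intro χ hχ
      have h := (hasDerivAt_id χ).mul (((hGderiv χ).sub (hdiff χ).hasDerivAt))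
      have h1 := heq χ hχ
      rw [hGeq χ hχ] at h1
      rw [show (1 * (G - ψ) χ + id χ * (-ψ χ - deriv ψ χ)) = 0 from by
        simp only [id_eq, Pi.sub_apply]; linarith] at h
      exact h
    intro χ hχ
    rcases eq_or_lt_of_le hχ with h0 | h0
    · -- at χ = 0 use the equation directly
      have h1 := heq 0 le_rfl
      rw [hGeq 0 le_rfl] at h1
      simp at h1
      rw [← h0]
      linarith
    · have hint0 : IntervalIntegrable (fun _ : ℝ => (0:ℝ)) volume 0 χ :=
        intervalIntegrable_const
      have := intervalIntegral.integral_eq_sub_of_hasDerivAt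
        (f := fun x => x * (G x - ψ x)) (f' := fun _ => (0:ℝ))
        (fun x hx => by
          rw [Set.uIcc_of_le hχ] at hx
          exact hE x hx.1) hint0
      simp at this
      rcases this with h | h
      · exact absurd h (ne_of_gt h0)
      · linarith
  -- now `G' = -G` on `[0,∞)`, so `G χ * e^χ` is constant
  have hK : ∀ χ : ℝ, 0 ≤ χ → HasDerivAt (fun x => G x * Real.exp x) 0 χ := by
    intro χ hχ
    have h := (hGderiv χ).mul (Real.hasDerivAt_exp χ)
    rw [show (-ψ χ * Real.exp χ + G χ * Real.exp χ) = 0 from by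
      rw [hGψ χ hχ]; ring] at h
    exact h
  intro χ hχ
  have hG0 : G 0 = 1 := by simp [hGdef]
  have hKχ : G χ * Real.exp χ = 1 := by
    rcases eq_or_lt_of_le hχ with h0 | h0
    · rw [← h0]; simp [hG0]
    · have hint0 : IntervalIntegrable (fun _ : ℝ => (0:ℝ)) volume 0 χ :=
        intervalIntegrable_const
      have := intervalIntegral.integral_eq_sub_of_hasDerivAt
        (f := fun x => G x * Real.exp x) (f' := fun _ => (0:ℝ))
        (fun x hx => by
          rw [Set.uIcc_of_le hχ] at hx
          exact hK x hx.1) hint0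
      simp [hG0] at this
      linarith
  have : G χ = Real.exp (-χ) := by
    rw [Real.exp_neg]
    field_simp at hKχ ⊢
    linarith [Real.exp_pos χ]
  rw [← hGψ χ hχ, this]
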